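/- Let θ : ℝ → ℝ be differentiable with sin θ(s) ≠ 0 and θ'(s) ≠ 0 for all s, let k ∈ ℝ⁴ be a fixed vector, and let u : ℝ → ℝ⁴ be differentiable satisfying cos θ(s)·u(s) − (sin θ(s)/θ'(s))·u'(s) = k for all s ∈ ℝ. Then there exists a constant vector φ ∈ ℝ⁴ such that u(s) = cos θ(s)·k + sin θ(s)·φ for all s ∈ ℝ. -/

import Mathlib

/-- Let `θ : ℝ → ℝ` be differentiable with `sin (θ s) ≠ 0` and `θ' s ≠ 0`
for all `s`, let `k ∈ ℝ⁴` be a fixed vector, and let `u : ℝ → ℝ⁴` be differentiable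
satisfying `cos (θ s) • u s - (sin (θ s) / θ' s) • u' s = k` for all `s`. Then there exists
a constant vector `φ ∈ ℝ⁴` such that `u s = cos (θ s) • k + sin (θ s) • φ` for all `s`. -/
theorem stmt_2 (θ : ℝ → ℝ) (k : EuclideanSpace ℝ (Fin 4))
    (u : ℝ → EuclideanSpace ℝ (Fin 4))
    (hθ : Differentiable ℝ θ) (hsin : ∀ s, Real.sin (θ s) ≠ 0)
    (hθ' : ∀ s, deriv θ s ≠ 0) (hu : Differentiable ℝ u)
    (hode : ∀ s, Real.cos (θ s) • u s - (Real.sin (θ s) / deriv θ s) • deriv u s = k) :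
    ∃ φ : EuclideanSpace ℝ (Fin 4),
      ∀ s, u s = Real.cos (θ s) • k + Real.sin (θ s) • φ := by
  set g : ℝ → EuclideanSpace ℝ (Fin 4) :=
    fun s => (Real.sin (θ s))⁻¹ • (u s - Real.cos (θ s) • k) with hg
  have hu' : ∀ s, deriv u s =
      (deriv θ s / Real.sin (θ s)) • (Real.cos (θ s) • u s - k) := by
    intro s
    have h := hode s
    have h2 : (Real.sin (θ s) / deriv θ s) • deriv u s
        = Real.cos (θ s) • u s - k := by
      rw [eq_sub_iff_add_eq, ← h]; abel
    have h3 := congrArg (fun v => (deriv θ s / Real.sin (θ s)) • v) h2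
    simpa [smul_smul, div_mul_div_comm, mul_comm,
      div_self (mul_ne_zero (hθ' s) (hsin s))] using h3
  have hderiv : ∀ s, HasDerivAt g 0 s := by
    intro s
    have hθs : HasDerivAt θ (deriv θ s) s := (hθ s).hasDerivAt
    have hus : HasDerivAt u (deriv u s) s := (hu s).hasDerivAt
    have hs : HasDerivAt (fun s => Real.sin (θ s))
        (Real.cos (θ s) * deriv θ s) s := (Real.hasDerivAt_sin _).comp s hθs
    have hinv : HasDerivAt (fun s => (Real.sin (θ s))⁻¹)
        (-(Real.cos (θ s) * deriv θ s) / (Real.sin (θ s))^2) s := hs.inv (hsin s)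
    have hc : HasDerivAt (fun s => Real.cos (θ s))
        (-Real.sin (θ s) * deriv θ s) s := by
      exact ((Real.hasDerivAt_cos (θ s)).comp s hθs).congr_deriv (by ring)
    have hv : HasDerivAt (fun s => u s - Real.cos (θ s) • k)
        (deriv u s - (-Real.sin (θ s) * deriv θ s) • k) s :=
      hus.sub (hc.smul_const k)
    have := hinv.smul hv
    refine this.congr_deriv ?_
    symm
    rw [hu' s]
    match_scalars
    all_goals try ring_nf
    all_goals rw [Real.cos_sq']
    all_goals field_simp [hsin s]
    all_goals ring
  have hgc : ∀ s, g s = g 0 := by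
    intro s
    rcases le_total 0 s with h | h
    · exact constant_of_has_deriv_right_zero (a := 0) (b := s)
        (f := g) (fun x _ => (hderiv x).continuousAt.continuousWithinAt)
        (fun x _ => (hderiv x).hasDerivWithinAt) s ⟨h, le_rfl⟩
    · exact (constant_of_has_deriv_right_zero (a := s) (b := 0)
        (f := g) (fun x _ => (hderiv x).continuousAt.continuousWithinAt)
        (fun x _ => (hderiv x).hasDerivWithinAt) 0 ⟨h, le_rfl⟩).symm
  refine ⟨g 0, fun s => ?_⟩
  have : Real.sin (θ s) • g s = u s - Real.cos (θ s) • k := by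
    rw [hg]; simp [smul_smul, mul_inv_cancel₀ (hsin s)]
  rw [← hgc s, this]; abel
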